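/- In the formal power series ring, the quantum dilogarithm \phi(x) = \prod_{i \geq 0}(1 - q^i x) satisfies the Euler expansion \phi(x) = \sum_{n \geq 0} (-1)^n q^{n(n-1)/2} x^n / (q)_n. -/

import Mathlib

open MvPowerSeries

/-- Coefficientwise topology on formal power series in the two variables `q` and `x`. -/
noncomputable instance : TopologicalSpace (MvPowerSeries (Fin 2) ℚ) :=
  inferInstanceAs (TopologicalSpace ((Fin 2 →₀ ℕ) → ℚ))

noncomputable def q : MvPowerSeries (Fin 2) ℚ := X 0
noncomputable def x : MvPowerSeries (Fin 2) ℚ := X 1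

/-- The q-Pochhammer symbol `(q;q)_n`. -/
noncomputable def qPoch (n : ℕ) : MvPowerSeries (Fin 2) ℚ :=
  ∏ i ∈ Finset.range n, (1 - q ^ (i + 1))

namespace QDL

abbrev M := MvPowerSeries (Fin 2) ℚ

noncomputable def D (a b : ℕ) : Fin 2 →₀ ℕ := Finsupp.single 0 a + Finsupp.single 1 b

@[simp] lemma D_apply_zero (a b : ℕ) : D a b 0 = a := by
  simp [D, Finsupp.single_apply]

@[simp] lemma D_apply_one (a b : ℕ) : D a b 1 = b := by
  simp [D, Finsupp.single_apply]

lemma D_spec (d : Fin 2 →₀ ℕ) : d = D (d 0) (d 1) := by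
  ext i; fin_cases i <;> simp

lemma D_le_D {a b c e : ℕ} : D c e ≤ D a b ↔ c ≤ a ∧ e ≤ b := by
  rw [Finsupp.le_def]
  constructor
  · intro h; exact ⟨by simpa using h 0, by simpa using h 1⟩
  · rintro ⟨h1, h2⟩ i; fin_cases i <;> simpa

lemma D_sub_D (a b c e : ℕ) : D a b - D c e = D (a - c) (b - e) := by
  ext i; fin_cases i <;> simp [Finsupp.tsub_apply]

lemma D_eq_zero {a b : ℕ} : D a b = 0 ↔ a = 0 ∧ b = 0 := by
  constructor
  · intro h
    constructor
    · have := DFunLike.congr_fun h 0; simpa using this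
    · have := DFunLike.congr_fun h 1; simpa using this
  · rintro ⟨rfl, rfl⟩; ext i; fin_cases i <;> simp

lemma qx_eq (i : ℕ) : q ^ i * x = monomial (D i 1) 1 := by
  have hx : (x : M) = monomial (Finsupp.single 1 1) 1 := by
    rw [x, ← pow_one (X 1 : M), X_pow_eq]
  rw [q, X_pow_eq, hx, monomial_mul_monomial, one_mul, D]

/-- Every monomial of `F` has `j`-component `> c`. -/
def Van (j : Fin 2) (c : ℕ) (F : M) : Prop :=
  ∀ e : Fin 2 →₀ ℕ, e j ≤ c → coeff e F = 0

lemma Van.add {j c} {F G : M} (hF : Van j c F) (hG : Van j c G) : Van j c (F + G) :=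
  fun e he => by rw [map_add, hF e he, hG e he, add_zero]

lemma Van.neg {j c} {F : M} (hF : Van j c F) : Van j c (-F) :=
  fun e he => by rw [map_neg, hF e he, neg_zero]

lemma Van.sub {j c} {F G : M} (hF : Van j c F) (hG : Van j c G) : Van j c (F - G) := by
  rw [sub_eq_add_neg]; exact hF.add hG.neg

lemma Van.mul_left {j c} {F : M} (hF : Van j c F) (G : M) : Van j c (G * F) := by
  intro e he
  rw [coeff_mul]
  apply Finset.sum_eq_zero
  rintro ⟨p1, p2⟩ hp
  rw [Finset.HasAntidiagonal.mem_antidiagonal] at hp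
  have : p2 j ≤ e j := by
    have := DFunLike.congr_fun hp j
    simp only [Finsupp.add_apply] at this
    omega
  rw [hF p2 (le_trans this he), mul_zero]

lemma Van.mul_right {j c} {F : M} (hF : Van j c F) (G : M) : Van j c (F * G) := by
  intro e he
  rw [coeff_mul]
  apply Finset.sum_eq_zero
  rintro ⟨p1, p2⟩ hp
  rw [Finset.HasAntidiagonal.mem_antidiagonal] at hp
  have : p1 j ≤ e j := by
    have := DFunLike.congr_fun hp j
    simp only [Finsupp.add_apply] at this
    omega
  rw [hF p1 (le_trans this he), zero_mul]

lemma van_qx_zero {c i : ℕ} (h : c < i) : Van 0 c (q ^ i * x) := by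
  intro e he
  rw [qx_eq, coeff_monomial]
  split_ifs with hm
  · subst hm; rw [D_apply_zero] at he; omega
  · rfl

lemma van_qx_one (i : ℕ) : Van 1 0 (q ^ i * x) := by
  intro e he
  rw [qx_eq, coeff_monomial]
  split_ifs with hm
  · subst hm; rw [D_apply_one] at he; omega
  · rfl

lemma prod_one_add {j : Fin 2} {c : ℕ} (T : Finset ℕ)
    (h : ∀ i ∈ T, Van j c (q ^ i * x)) :
    ∃ R : M, (∏ i ∈ T, (1 - q ^ i * x)) = 1 + R ∧ Van j c R := by
  classical
  induction T using Finset.induction_on with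
  | empty => exact ⟨0, by simp, fun e _ => by simp⟩
  | insert _ _ hnot ih =>
    rename_i a T
    obtain ⟨R, hR, hv⟩ := ih (fun i hi => h i (Finset.mem_insert_of_mem hi))
    have ha : Van j c (q ^ a * x) := h a (Finset.mem_insert_self a T)
    refine ⟨R - q ^ a * x - q ^ a * x * R, ?_, ?_⟩
    · rw [Finset.prod_insert hnot, hR]; ring
    · exact (hv.sub ha).sub (ha.mul_right R)

noncomputable def PP (N : ℕ) : M := ∏ i ∈ Finset.range N, (1 - q ^ i * x)

lemma coeff_prod_stab (d : Fin 2 →₀ ℕ) {S : Finset ℕ} (hS : Finset.range (d 0 + 1) ⊆ S) :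
    coeff d (∏ i ∈ S, (1 - q ^ i * x)) = coeff d (PP (d 0 + 1)) := by
  classical
  rw [← Finset.prod_sdiff hS]
  obtain ⟨R, hR, hv⟩ := prod_one_add (j := 0) (c := d 0) (S \ Finset.range (d 0 + 1))
    (fun i hi => by
      refine van_qx_zero ?_
      have := (Finset.mem_sdiff.mp hi).2
      simp only [Finset.mem_range] at this
      omega)
  rw [hR, add_mul, one_mul, map_add, hv.mul_right _ d le_rfl, add_zero]
  rfl

noncomputable def phi (a b : ℕ) : ℚ := coeff (D a b) (PP (a + 1))

lemma coeff_PP {a b N : ℕ} (h : a + 1 ≤ N) : coeff (D a b) (PP N) = phi a b := by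
  have h2 := coeff_prod_stab (D a b) (S := Finset.range N)
    (by rw [D_apply_zero]; exact Finset.range_subset_range.mpr h)
  rw [PP] at h2 ⊢
  rw [h2, D_apply_zero, phi, PP]

lemma coeff_mul_qx (G : M) (a b i : ℕ) :
    coeff (D a b) (G * (q ^ i * x)) =
      if i ≤ a ∧ 1 ≤ b then coeff (D (a - i) (b - 1)) G else 0 := by
  rw [qx_eq, coeff_mul_monomial]
  by_cases h : i ≤ a ∧ 1 ≤ b
  · rw [if_pos (D_le_D.mpr h), if_pos h, D_sub_D, mul_one]
  · rw [if_neg (fun hc => h (D_le_D.mp hc)), if_neg h]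

lemma coeff_mul_one_sub_qx (G : M) (a b i : ℕ) :
    coeff (D a b) (G * (1 - q ^ i * x)) =
      coeff (D a b) G - (if i ≤ a ∧ 1 ≤ b then coeff (D (a - i) (b - 1)) G else 0) := by
  rw [mul_one_sub, map_sub, coeff_mul_qx]

lemma shift (N : ℕ) : ∀ a b : ℕ,
    coeff (D a b) (∏ i ∈ Finset.range N, (1 - q ^ (i + 1) * x)) =
      if b ≤ a then coeff (D (a - b) b) (PP N) else 0 := by
  induction N with
  | zero =>
    intro a b
    simp only [Finset.range_zero, Finset.prod_empty, PP, coeff_one]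
    by_cases hb : b ≤ a
    · rw [if_pos hb]
      by_cases h0 : a = 0 ∧ b = 0
      · rw [if_pos (D_eq_zero.mpr h0), if_pos (D_eq_zero.mpr ⟨by omega, h0.2⟩)]
      · rw [if_neg (fun hc => h0 (D_eq_zero.mp hc)),
          if_neg (fun hc => h0 ⟨by have := (D_eq_zero.mp hc); omega,
            (D_eq_zero.mp hc).2⟩)]
    · rw [if_neg hb, if_neg (fun hc => hb (by have := D_eq_zero.mp hc; omega))]
  | succ N ih =>
    intro a b
    have hPP : PP (N + 1) = PP N * (1 - q ^ N * x) := Finset.prod_range_succ _ _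
    rw [Finset.prod_range_succ, coeff_mul_one_sub_qx, ih a b, ih (a - (N + 1)) (b - 1),
      hPP, coeff_mul_one_sub_qx]
    by_cases h1 : b ≤ a
    · rw [if_pos h1, if_pos h1]
      by_cases h2 : N + b ≤ a ∧ 1 ≤ b
      · rw [if_pos (show N + 1 ≤ a ∧ 1 ≤ b by omega), if_pos (show b - 1 ≤ a - (N + 1) by omega),
          if_pos (show N ≤ a - b ∧ 1 ≤ b by omega)]
        have e1 : a - (N + 1) - (b - 1) = a - b - N := by omega
        rw [e1]
      · rw [if_neg (show ¬(N ≤ a - b ∧ 1 ≤ b) by omega), sub_zero]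
        by_cases h3 : N + 1 ≤ a ∧ 1 ≤ b
        · rw [if_pos h3, if_neg (show ¬(b - 1 ≤ a - (N + 1)) by omega), sub_zero]
        · rw [if_neg h3, sub_zero]
    · rw [if_neg h1, if_neg h1, zero_sub]
      by_cases h3 : N + 1 ≤ a ∧ 1 ≤ b
      · rw [if_pos h3, if_neg (show ¬(b - 1 ≤ a - (N + 1)) by omega), neg_zero]
      · rw [if_neg h3, neg_zero]

lemma phi_rec (a b : ℕ) (hb : 1 ≤ b) :
    phi a b = (if b ≤ a then phi (a - b) b else 0)
      - (if b - 1 ≤ a then phi (a - (b - 1)) (b - 1) else 0) := by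
  have h1 : phi a b = coeff (D a b) (PP (a + 2)) := (coeff_PP (by omega)).symm
  have h2 : PP (a + 2)
      = (∏ i ∈ Finset.range (a + 1), (1 - q ^ (i + 1) * x)) * (1 - q ^ 0 * x) := by
    rw [PP]
    exact Finset.prod_range_succ' (fun i => 1 - q ^ i * x) (a + 1)
  rw [h1, h2, coeff_mul_one_sub_qx, if_pos ⟨Nat.zero_le a, hb⟩, Nat.sub_zero,
    shift (a + 1) a b, shift (a + 1) a (b - 1)]
  congr 1
  · by_cases h : b ≤ a
    · rw [if_pos h, if_pos h, coeff_PP (by omega)]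
    · rw [if_neg h, if_neg h]
  · by_cases h : b - 1 ≤ a
    · rw [if_pos h, if_pos h, coeff_PP (by omega)]
    · rw [if_neg h, if_neg h]

/-- `F` involves only the variable `q`. -/
def XO (F : M) : Prop := ∀ e : Fin 2 →₀ ℕ, e 1 ≠ 0 → coeff e F = 0

lemma xo_one : XO 1 := by
  intro e he
  rw [coeff_one, if_neg]
  intro h0; exact he (by rw [h0]; rfl)

lemma xo_qpow (k : ℕ) : XO (q ^ k) := by
  intro e he
  rw [q, X_pow_eq, coeff_monomial, if_neg]
  intro h0
  subst h0
  exact he (by simp [Finsupp.single_apply])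

lemma XO.sub {F G : M} (hF : XO F) (hG : XO G) : XO (F - G) := fun e he => by
  rw [map_sub, hF e he, hG e he, sub_zero]

lemma XO.mul {F G : M} (hF : XO F) (hG : XO G) : XO (F * G) := by
  intro e he
  rw [coeff_mul]
  apply Finset.sum_eq_zero
  rintro ⟨p1, p2⟩ hp
  rw [Finset.HasAntidiagonal.mem_antidiagonal] at hp
  have hsum : p1 1 + p2 1 = e 1 := by
    have := DFunLike.congr_fun hp 1
    simpa using this
  by_cases h1 : p1 1 = 0
  · rw [hG p2 (by omega), mul_zero]
  · rw [hF p1 h1, zero_mul]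

lemma xo_qPoch (n : ℕ) : XO (qPoch n) := by
  rw [qPoch]
  refine Finset.prod_induction _ XO (fun _ _ ha hb => ha.mul hb) xo_one ?_
  exact fun i _ => xo_one.sub (xo_qpow (i + 1))

lemma XO.inv {F : M} (h : XO F) : XO F⁻¹ := by
  classical
  suffices H : ∀ n (e : Fin 2 →₀ ℕ), e 0 + e 1 = n → e 1 ≠ 0 → coeff e F⁻¹ = 0 by
    exact fun e he => H _ e rfl he
  intro n
  induction n using Nat.strong_induction_on with
  | _ n IH =>
  intro e hd he
  rw [MvPowerSeries.coeff_inv, if_neg (fun h0 => he (by rw [h0]; rfl))]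
  have hz : ∑ p ∈ Finset.HasAntidiagonal.antidiagonal e,
      (if p.2 < e then coeff p.1 F * coeff p.2 F⁻¹ else 0) = 0 := by
    apply Finset.sum_eq_zero
    rintro ⟨p1, p2⟩ hp
    rw [Finset.HasAntidiagonal.mem_antidiagonal] at hp
    split_ifs with hlt
    · have hsum0 : p1 0 + p2 0 = e 0 := by simpa using DFunLike.congr_fun hp 0
      have hsum1 : p1 1 + p2 1 = e 1 := by simpa using DFunLike.congr_fun hp 1
      by_cases hx : p2 1 = 0
      · rw [h p1 (by omega), zero_mul]
      · have hle : p2 ≤ e := le_of_lt hlt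
        have hne : p2 ≠ e := ne_of_lt hlt
        have h0 : p2 0 ≤ e 0 := Finsupp.le_def.mp hle 0
        have h1 : p2 1 ≤ e 1 := Finsupp.le_def.mp hle 1
        have hlt' : p2 0 + p2 1 < n := by
          rcases Nat.lt_or_ge (p2 0 + p2 1) n with hc | hc
          · exact hc
          · exfalso
            apply hne
            have e0 : p2 0 = e 0 := by omega
            have e1 : p2 1 = e 1 := by omega
            ext i; fin_cases i
            · exact e0
            · exact e1
        rw [IH _ hlt' p2 rfl hx, mul_zero]
    · rfl
  rw [hz, mul_zero]

noncomputable def term (n : ℕ) : M :=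
  (-1 : M) ^ n * q ^ (n * (n - 1) / 2) * x ^ n * (qPoch n)⁻¹

lemma constCoeff_qPoch (n : ℕ) : constantCoeff (qPoch n) = 1 := by
  rw [qPoch, map_prod]
  rw [Finset.prod_eq_one]
  intro i _
  rw [map_sub, map_one, map_pow, q, constantCoeff_X, zero_pow (Nat.succ_ne_zero i), sub_zero]

lemma constCoeff_qPoch_ne (n : ℕ) : constantCoeff (qPoch n) ≠ 0 := by
  rw [constCoeff_qPoch]; exact one_ne_zero

lemma qPoch_ne_zero (n : ℕ) : qPoch n ≠ 0 := by
  intro h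
  exact constCoeff_qPoch_ne n (by rw [h, map_zero])

lemma monomial_form (n k : ℕ) :
    ((-1 : M) ^ n * q ^ k * x ^ n) = monomial (D k n) ((-1 : ℚ) ^ n) := by
  have h1 : ((-1 : M)) ^ n = C ((-1 : ℚ) ^ n) := by
    rw [map_pow, map_neg, map_one]
  have hx : (x : M) ^ n = monomial (Finsupp.single 1 n) 1 := by rw [x, X_pow_eq]
  rw [h1, q, X_pow_eq, hx, ← monomial_zero_eq_C_apply, monomial_mul_monomial,
    monomial_mul_monomial, mul_one, mul_one, zero_add, D]

lemma term_eq (n : ℕ) :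
    term n = monomial (D (n * (n - 1) / 2) n) ((-1 : ℚ) ^ n) * (qPoch n)⁻¹ := by
  rw [term, monomial_form]

lemma coeff_term_ne {a b n : ℕ} (hbn : b ≠ n) : coeff (D a b) (term n) = 0 := by
  rw [term_eq, coeff_monomial_mul]
  split_ifs with h
  · obtain ⟨h1, h2⟩ := D_le_D.mp h
    rw [D_sub_D]
    rw [(xo_qPoch n).inv (D (a - n * (n - 1) / 2) (b - n)) (by rw [D_apply_one]; omega),
      mul_zero]
  · rfl

lemma K_succ (n : ℕ) : (n + 1) * ((n + 1) - 1) / 2 = n * (n - 1) / 2 + n := by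
  simp only [Nat.add_sub_cancel]
  rcases n with _ | m
  · rfl
  · have h2 : (m + 2) * (m + 1) = (m + 1) * ((m + 1) - 1) + 2 * (m + 1) := by
      simp only [Nat.add_sub_cancel]
      ring
    rw [h2, Nat.add_mul_div_left _ _ (by norm_num : 0 < 2)]

lemma inv_mul_qPoch (n : ℕ) : (qPoch n)⁻¹ * qPoch n = 1 :=
  MvPowerSeries.inv_mul_cancel _ (constCoeff_qPoch_ne n)

lemma term_mul_qPoch (n : ℕ) :
    term n * qPoch n = (-1 : M) ^ n * q ^ (n * (n - 1) / 2) * x ^ n := by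
  rw [term, mul_assoc, inv_mul_qPoch, mul_one]

lemma qPoch_succ (n : ℕ) : qPoch (n + 1) = qPoch n * (1 - q ^ (n + 1)) :=
  Finset.prod_range_succ _ _

lemma term_rec (n : ℕ) :
    term (n + 1) = q ^ (n + 1) * term (n + 1) - q ^ n * x * term n := by
  apply mul_right_cancel₀ (qPoch_ne_zero (n + 1))
  rw [sub_mul, mul_assoc (q ^ (n + 1)), term_mul_qPoch, qPoch_succ,
    mul_assoc (q ^ n * x), ← mul_assoc (term n), term_mul_qPoch, K_succ]
  ring

noncomputable def psi (a b : ℕ) : ℚ := coeff (D a b) (term b)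

lemma q_pow_monomial (i : ℕ) : (q : M) ^ i = monomial (D i 0) 1 := by
  rw [q, X_pow_eq, D, Finsupp.single_zero, add_zero]

lemma psi_rec (a n : ℕ) :
    psi a (n + 1) = (if n + 1 ≤ a then psi (a - (n + 1)) (n + 1) else 0)
      - (if n ≤ a then psi (a - n) n else 0) := by
  unfold psi
  conv_lhs => rw [term_rec n]
  rw [map_sub]
  congr 1
  · rw [q_pow_monomial, coeff_monomial_mul]
    by_cases h : n + 1 ≤ a
    · rw [if_pos (D_le_D.mpr ⟨h, Nat.zero_le _⟩), if_pos h, D_sub_D, one_mul, Nat.sub_zero]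
    · rw [if_neg (fun hc => h (D_le_D.mp hc).1), if_neg h]
  · rw [qx_eq, coeff_monomial_mul]
    by_cases h : n ≤ a
    · rw [if_pos (D_le_D.mpr ⟨h, by omega⟩), if_pos h, D_sub_D, one_mul, Nat.add_sub_cancel]
    · rw [if_neg (fun hc => h (D_le_D.mp hc).1), if_neg h]

lemma psi_base (a : ℕ) : psi a 0 = if a = 0 then 1 else 0 := by
  have h0 : qPoch 0 = 1 := by rw [qPoch, Finset.range_zero, Finset.prod_empty]
  have h1 : (qPoch 0)⁻¹ = (1 : M) := by
    have := inv_mul_qPoch 0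
    rwa [h0, mul_one] at this
  unfold psi term
  rw [h1]
  simp only [pow_zero, one_mul, mul_one, Nat.zero_mul, Nat.zero_div, coeff_one]
  by_cases h : a = 0
  · rw [if_pos (D_eq_zero.mpr ⟨h, rfl⟩), if_pos h]
  · rw [if_neg (fun hc => h (D_eq_zero.mp hc).1), if_neg h]

lemma phi_base (a : ℕ) : phi a 0 = if a = 0 then 1 else 0 := by
  unfold phi PP
  obtain ⟨R, hR, hv⟩ := prod_one_add (j := 1) (c := 0) (Finset.range (a + 1))
    (fun i _ => van_qx_one i)
  rw [hR, map_add, hv (D a 0) (by rw [D_apply_one]), add_zero, coeff_one]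
  by_cases h : a = 0
  · rw [if_pos (D_eq_zero.mpr ⟨h, rfl⟩), if_pos h]
  · rw [if_neg (fun hc => h (D_eq_zero.mp hc).1), if_neg h]

lemma phi_eq_psi : ∀ b a : ℕ, phi a b = psi a b := by
  intro b
  induction b with
  | zero => intro a; rw [phi_base, psi_base]
  | succ n IH =>
    intro a
    induction a using Nat.strong_induction_on with
    | _ a IH2 =>
    rw [phi_rec a (n + 1) (by omega), psi_rec a n]
    simp only [Nat.add_sub_cancel]
    congr 1
    · by_cases h : n + 1 ≤ a
      · rw [if_pos h, if_pos h, IH2 (a - (n + 1)) (by omega)]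
      · rw [if_neg h, if_neg h]
    · by_cases h : n ≤ a
      · rw [if_pos h, if_pos h, IH (a - n)]
      · rw [if_neg h, if_neg h]

noncomputable def Phi : M := fun d => phi (d 0) (d 1)
noncomputable def Psi : M := fun d => psi (d 0) (d 1)

lemma hasProd : HasProd (fun i : ℕ => 1 - q ^ i * x) Phi := by
  have key : ∀ d : Fin 2 →₀ ℕ, ∀ S : Finset ℕ, Finset.range (d 0 + 1) ⊆ S →
      coeff d (∏ i ∈ S, (1 - q ^ i * x)) = Phi d := by
    intro d S hS
    rw [coeff_prod_stab d hS]
    show _ = phi (d 0) (d 1)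
    rw [phi, ← D_spec d]
  have : Filter.Tendsto (fun S : Finset ℕ => ∏ i ∈ S, (1 - q ^ i * x))
      Filter.atTop (nhds Phi) := by
    refine tendsto_pi_nhds.mpr fun d => ?_
    refine Filter.Tendsto.congr' ?_ tendsto_const_nhds
    filter_upwards [Filter.eventually_ge_atTop (Finset.range (d 0 + 1))] with S hS
    exact (key d S hS).symm
  exact this

lemma hasSum :
    HasSum (fun n : ℕ => ((-1 : M)) ^ n * q ^ (n * (n - 1) / 2) * x ^ n * (qPoch n)⁻¹) Psi := by
  have key : ∀ d : Fin 2 →₀ ℕ, ∀ S : Finset ℕ, Finset.range (d 1 + 1) ⊆ S →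
      ∑ n ∈ S, coeff d (term n) = Psi d := by
    intro d S hS
    rw [Finset.sum_eq_single_of_mem (d 1) (hS (Finset.mem_range.mpr (by omega)))]
    · show _ = psi (d 0) (d 1)
      rw [psi, ← D_spec d]
    · intro n _ hne
      calc coeff d (term n) = coeff (D (d 0) (d 1)) (term n) := by rw [← D_spec d]
        _ = 0 := coeff_term_ne (fun hc => hne (by omega))
  have : Filter.Tendsto (fun S : Finset ℕ => ∑ n ∈ S, term n)
      Filter.atTop (nhds Psi) := by
    refine tendsto_pi_nhds.mpr fun d => ?_
    refine Filter.Tendsto.congr' ?_ tendsto_const_nhds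
    filter_upwards [Filter.eventually_ge_atTop (Finset.range (d 1 + 1))] with S hS
    have : ∑ n ∈ S, coeff d (term n) = Psi d := key d S hS
    rw [← this]
    show ∑ n ∈ S, coeff d (term n) = coeff d (∑ n ∈ S, term n)
    rw [map_sum]
  exact this

lemma Phi_eq_Psi : Phi = Psi := by
  funext d
  exact phi_eq_psi (d 1) (d 0)

end QDL

/-- The quantum dilogarithm `φ(x) = ∏_{i ≥ 0} (1 - qⁱ x)` satisfies the Euler expansion
`φ(x) = ∑_{n ≥ 0} (-1)ⁿ q^{n(n-1)/2} xⁿ / (q)_n`, as formal power series in `q` and `x`. -/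
theorem quantum_dilogarithm_euler_expansion :
    (∏' i : ℕ, (1 - q ^ i * x)) =
      ∑' n : ℕ, ((-1 : MvPowerSeries (Fin 2) ℚ)) ^ n * q ^ (n * (n - 1) / 2) * x ^ n *
        (qPoch n)⁻¹ := by
  haveI : T2Space (MvPowerSeries (Fin 2) ℚ) := inferInstanceAs (T2Space ((Fin 2 →₀ ℕ) → ℚ))
  rw [QDL.hasProd.tprod_eq, QDL.hasSum.tsum_eq, QDL.Phi_eq_Psi]
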